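/- arXiv:1910.08095 — 3 statements merged into one kernel-verified Lean document; each statement's English description precedes it below -/
import Mathlib

section
/- Every automorphism of order 7 of the Heawood graph fixes no vertex, and every orbit of its action on the 21 edges of the Heawood graph has size exactly 7. -/
/-- The Heawood graph `C₁₄` on vertex set `ZMod 14`: distinct vertices `i` and `j` are
adjacent iff `j = i ± 1`, or `i` is even and `j = i + 5`, or `i` is odd and `j = i - 5`
(LCF notation `[5, -5]⁷`). -/
def heawood : SimpleGraph (ZMod 14) where
  Adj i j := i ≠ j ∧ (j = i + 1 ∨ j = i - 1 ∨
    (i.val % 2 = 0 ∧ j = i + 5) ∨ (i.val % 2 = 1 ∧ j = i - 5))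
  symm := ⟨by intro i j h; revert i j; decide⟩
  loopless := ⟨by intro i h; revert i h; decide⟩

instance : DecidableRel heawood.Adj := fun i j =>
  decidable_of_iff (i ≠ j ∧ (j = i + 1 ∨ j = i - 1 ∨
    (i.val % 2 = 0 ∧ j = i + 5) ∨ (i.val % 2 = 1 ∧ j = i - 5))) Iff.rfl

lemma heawood_pow_apply (β : heawood ≃g heawood) (n : ℕ) (x : ZMod 14) :
    (β ^ n) x = β^[n] x := by
  induction n generalizing x with
  | zero => rfl
  | succ n ih =>
    rw [pow_succ, Function.iterate_succ_apply]
    exact ih (β x)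

lemma heawood_degree (x : ZMod 14) : (heawood.neighborFinset x).card = 3 := by
  revert x; decide

lemma heawood_adj_succ (i : ZMod 14) : heawood.Adj i (i + 1) := by
  revert i; decide

lemma heawood_reach_zero (w : ZMod 14) : heawood.Reachable 0 w := by
  have key : ∀ n : ℕ, heawood.Reachable 0 (n : ZMod 14) := by
    intro n
    induction n with
    | zero => exact SimpleGraph.Reachable.refl 0
    | succ n ih =>
      push_cast
      exact ih.trans (heawood_adj_succ (n : ZMod 14)).reachable
  have := key w.val
  rwa [ZMod.natCast_rightInverse w] at this

lemma heawood_preconnected : heawood.Preconnected := fun a b =>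
  (heawood_reach_zero a).symm.trans (heawood_reach_zero b)

/-- If `β` satisfies `β ^ 7 = 1` and fixes `x`, it fixes all neighbors of `x`. -/
lemma heawood_fix_adj (β : heawood ≃g heawood) (h7 : β ^ 7 = 1)
    (x y : ZMod 14) (hx : β x = x) (hxy : heawood.Adj x y) : β y = y := by
  have hmem : ∀ n : ℕ, β^[n] y ∈ heawood.neighborFinset x := by
    intro n
    induction n with
    | zero => exact (heawood.mem_neighborFinset x y).mpr hxy
    | succ n ih =>
      rw [Function.iterate_succ_apply']
      have h := (heawood.mem_neighborFinset x _).mp ih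
      have : heawood.Adj (β x) (β (β^[n] y)) := β.map_rel_iff.mpr h
      rw [hx] at this
      exact (heawood.mem_neighborFinset x _).mpr this
  -- pigeonhole among y, βy, β²y, β³y
  obtain ⟨i, hi, j, hj, hij, heq⟩ :=
    Finset.exists_ne_map_eq_of_card_lt_of_maps_to
      (s := Finset.range 4) (t := heawood.neighborFinset x)
      (f := fun n => β^[n] y)
      (by rw [heawood_degree x, Finset.card_range]; norm_num)
      (fun a _ => hmem a)
  simp only [Finset.mem_range] at hi hj
  -- wlog i < j
  rcases hij.lt_or_gt with hlt | hlt
  all_goals {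
    -- extract a period d with 1 ≤ d ≤ 3
    have hper7 : Function.IsPeriodicPt (⇑β) 7 y := by
      show β^[7] y = y
      rw [← heawood_pow_apply, h7]; rfl
    first
    | (have key : β^[j - i] y = y := by
        have : β^[i] (β^[j - i] y) = β^[i] y := by
          rw [← Function.iterate_add_apply]
          rw [Nat.add_sub_cancel' hlt.le]
          exact heq.symm
        exact (β.injective.iterate i) this
       have hperd : Function.IsPeriodicPt (⇑β) (j - i) y := key
       have hgcd := hperd.gcd hper7
       have hd1 : 1 ≤ j - i := by omega
       have hd3 : j - i ≤ 3 := by omega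
       have : Nat.gcd (j - i) 7 = 1 := by interval_cases h : (j - i) <;> decide
       rw [this] at hgcd
       simpa [Function.IsPeriodicPt, Function.IsFixedPt] using hgcd)
    | (have key : β^[i - j] y = y := by
        have : β^[j] (β^[i - j] y) = β^[j] y := by
          rw [← Function.iterate_add_apply]
          rw [Nat.add_sub_cancel' hlt.le]
          exact heq
        exact (β.injective.iterate j) this
       have hperd : Function.IsPeriodicPt (⇑β) (i - j) y := key
       have hgcd := hperd.gcd hper7
       have hd1 : 1 ≤ i - j := by omega
       have hd3 : i - j ≤ 3 := by omega
       have : Nat.gcd (i - j) 7 = 1 := by interval_cases h : (i - j) <;> decide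
       rw [this] at hgcd
       simpa [Function.IsPeriodicPt, Function.IsFixedPt] using hgcd)
  }

/-- An order-7 automorphism of the Heawood graph has no fixed vertex. -/
lemma heawood_no_fixed (β : heawood ≃g heawood) (hβ : orderOf β = 7)
    (v : ZMod 14) : β v ≠ v := by
  intro hv
  have h7 : β ^ 7 = 1 := by rw [← hβ]; exact pow_orderOf_eq_one β
  have hall : ∀ ⦃a b : ZMod 14⦄, heawood.Walk a b → β a = a → β b = b := by
    intro a b p
    induction p with
    | nil => exact id
    | cons ha _ ih => intro h; exact ih (heawood_fix_adj β h7 _ _ h ha)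
  have hone : β = 1 := by
    apply RelIso.ext
    intro w
    obtain ⟨p⟩ := heawood_preconnected v w
    exact hall p hv
  rw [hone, orderOf_one] at hβ
  exact absurd hβ (by norm_num)

lemma heawood_fix_pow (α : heawood ≃g heawood) (hα : orderOf α = 7)
    {m : ℕ} (hm : ¬ (7 ∣ m)) (x : ZMod 14) : (α ^ m) x ≠ x := by
  have hcop : Nat.gcd (orderOf α) m = 1 := by
    rw [hα]
    exact (Nat.Prime.coprime_iff_not_dvd (by norm_num)).mpr hm
  have : orderOf (α ^ m) = 7 := by
    rw [orderOf_pow' α (by rintro rfl; exact hm ⟨0, rfl⟩), hcop, Nat.div_one, hα]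
  exact heawood_no_fixed _ this x

lemma heawood_key (α : heawood ≃g heawood) (hα : orderOf α = 7)
    {u v : ZMod 14} (hadj : heawood.Adj u v) {i j : ℕ} (hij : i ≤ j)
    (h : Sym2.map ⇑(α ^ i) s(u, v) = Sym2.map ⇑(α ^ j) s(u, v)) :
    (7 : ℕ) ∣ (j - i) := by
  by_contra hnd
  set d := j - i with hd
  have hj' : j = i + d := by omega
  rw [Sym2.map_pair_eq, Sym2.map_pair_eq, Sym2.eq_iff] at h
  have happ : ∀ w : ZMod 14, (α ^ j) w = (α ^ i) ((α ^ d) w) := by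
    intro w
    rw [hj', pow_add]
    rfl
  rcases h with ⟨h1, _⟩ | ⟨h1, h2⟩
  · rw [happ] at h1
    have : (α ^ d) u = u := (α ^ i).injective h1.symm
    exact heawood_fix_pow α hα hnd u this
  · rw [happ] at h1 h2
    have e1 : v = (α ^ d) u := (α ^ i).injective h2
    have e2 : u = (α ^ d) v := (α ^ i).injective h1

    have : (α ^ (d + d)) u = u := by
      rw [pow_add]
      show (α ^ d) ((α ^ d) u) = u
      rw [← e1, ← e2]
    have hnd2 : ¬ (7 ∣ (d + d)) := by
      intro hdvd
      have : (7 : ℕ) ∣ d := by omega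
      exact hnd this
    exact heawood_fix_pow α hα hnd2 u this

/-- Every automorphism of order 7 of the Heawood graph fixes no vertex, and every orbit
of its action on the edges of the Heawood graph has size exactly 7. -/
theorem heawood_order_seven_vertex_and_edge_orbits (α : heawood ≃g heawood)
    (hα : orderOf α = 7) :
    (∀ v : ZMod 14, α v ≠ v) ∧
      ∀ e ∈ heawood.edgeSet,
        {f : Sym2 (ZMod 14) | ∃ k : ℤ, f = Sym2.map ⇑(α ^ k) e}.ncard = 7 := by
  have h7 : α ^ (7 : ℕ) = 1 := by rw [← hα]; exact pow_orderOf_eq_one α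
  constructor
  · exact heawood_no_fixed α hα
  · intro e he
    induction e with
    | h u v =>
      rw [SimpleGraph.mem_edgeSet] at he
      have hinj : Function.Injective
          (fun k : Fin 7 => Sym2.map ⇑(α ^ (k : ℕ)) s(u, v)) := by
        intro i j hij
        simp only at hij
        have hi7 : (i : ℕ) < 7 := i.isLt
        have hj7 : (j : ℕ) < 7 := j.isLt
        rcases le_total (i : ℕ) (j : ℕ) with hle | hle
        · obtain ⟨c, hc⟩ := heawood_key α hα he hle hij
          exact Fin.ext (by omega)
        · obtain ⟨c, hc⟩ := heawood_key α hα he hle hij.symm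
          exact Fin.ext (by omega)
      have hset : {f : Sym2 (ZMod 14) | ∃ k : ℤ, f = Sym2.map ⇑(α ^ k) s(u, v)} =
          (fun k : Fin 7 => Sym2.map ⇑(α ^ (k : ℕ)) s(u, v)) '' Set.univ := by
        ext f
        simp only [Set.mem_setOf_eq, Set.image_univ, Set.mem_range]
        constructor
        · rintro ⟨k, rfl⟩
          have hk7 : (0 : ℤ) ≤ k % 7 := Int.emod_nonneg k (by norm_num)
          have hlt : k % 7 < 7 := Int.emod_lt_of_pos k (by norm_num)
          refine ⟨⟨(k % 7).toNat, by omega⟩, ?_⟩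
          congr 1
          have : α ^ k = α ^ ((k % 7).toNat : ℕ) := by
            rw [← zpow_natCast, Int.toNat_of_nonneg hk7]
            conv_lhs => rw [← Int.mul_ediv_add_emod k 7]
            rw [zpow_add, zpow_mul,
              show ((7 : ℤ) = ((7 : ℕ) : ℤ)) from rfl, zpow_natCast, h7, one_zpow,
              one_mul]
          rw [this]
        · rintro ⟨k, rfl⟩
          exact ⟨(k : ℕ), by rw [zpow_natCast]⟩
      rw [hset, Set.ncard_image_of_injective _ hinj, Set.ncard_univ, Nat.card_eq_fintype_card,
        Fintype.card_fin]
end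

section
/- If an automorphism of the Heawood graph has order 2 and setwise fixes some 12-cycle or some 14-cycle, then it fixes no vertex of the Heawood graph. -/
/-- The set of `n`-cycles of a graph `G`, each cycle recorded as its edge set (so that
cycles are counted as subgraphs, i.e. up to choice of starting vertex and direction). -/
def cycleEdgeSets {V : Type*} [DecidableEq V] (G : SimpleGraph V) (n : ℕ) :
    Set (Finset (Sym2 V)) :=
  {s | ∃ (v : V) (w : G.Walk v v), w.IsCycle ∧ w.length = n ∧ w.edges.toFinset = s}

namespace HeawoodProof

instance : DecidableRel heawood.Adj := fun i j =>
  inferInstanceAs (Decidable (i ≠ j ∧ (j = i + 1 ∨ j = i - 1 ∨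
    (i.val % 2 = 0 ∧ j = i + 5) ∨ (i.val % 2 = 1 ∧ j = i - 5))))

/-! ### Boolean model of the Heawood graph on `ℕ` -/

def adjB (i j : ℕ) : Bool :=
  j == (i+1)%14 || j == (i+13)%14 || (i%2 == 0 && j == (i+5)%14) || (i%2 == 1 && j == (i+9)%14)
def chdB (v : ℕ) : ℕ := if v % 2 == 0 then (v+5)%14 else (v+9)%14
def t3B (v a b : ℕ) : ℕ :=
  if a == (v+1)%14 || b == (v+1)%14 then
    (if a == (v+13)%14 || b == (v+13)%14 then chdB v else (v+13)%14)
  else (v+1)%14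
def ucnB (x y : ℕ) : ℕ :=
  if adjB x ((y+1)%14) then (y+1)%14 else if adjB x ((y+13)%14) then (y+13)%14 else chdB y
def FB (a0 a1 a2 a3 a4 v : ℕ) : ℕ :=
  if v == 0 then a0 else if v == 1 then a1 else if v == 2 then a2
  else if v == 3 then a3 else if v == 4 then a4
  else if v == 5 then ucnB a0 a4
  else if v == 10 then t3B a1 a0 a2
  else if v == 7 then t3B a2 a1 a3
  else if v == 12 then t3B a3 a2 a4
  else if v == 6 then ucnB (ucnB a0 a4) (t3B a2 a1 a3)
  else if v == 11 then ucnB (t3B a1 a0 a2) (t3B a3 a2 a4)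
  else if v == 13 then ucnB (t3B a3 a2 a4) a0
  else if v == 9 then ucnB a4 (t3B a1 a0 a2)
  else ucnB (t3B a2 a1 a3) (ucnB (t3B a3 a2 a4) a0)

def rng : List ℕ := List.range 14

/-- The key boolean check: every involutive automorphism of the Heawood graph which has a
fixed vertex possesses two distinct fixed vertices all of whose neighbours are fixed. -/
def keyB : Bool := rng.all fun a0 => rng.all fun a1 => !adjB a0 a1 ||
  (rng.all fun a2 => !adjB a1 a2 ||
    (rng.all fun a3 => !adjB a2 a3 ||
      (rng.all fun a4 => !adjB a3 a4 ||
        (!(rng.all fun i => FB a0 a1 a2 a3 a4 (FB a0 a1 a2 a3 a4 i) == i) ||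
         !(rng.any fun x => FB a0 a1 a2 a3 a4 x == x) ||
         (rng.any fun a => rng.any fun b => a != b && FB a0 a1 a2 a3 a4 a == a &&
            FB a0 a1 a2 a3 a4 b == b &&
            (rng.all fun x => !adjB a x || FB a0 a1 a2 a3 a4 x == x) &&
            (rng.all fun x => !adjB b x || FB a0 a1 a2 a3 a4 x == x))))))

set_option maxRecDepth 100000 in
set_option maxHeartbeats 4000000 in
lemma keyB_true : keyB = true := by decide

/-- Unpacked form of `keyB`. -/
lemma key' (a0 a1 a2 a3 a4 : ℕ) (h0 : a0 < 14) (h1 : a1 < 14) (h2 : a2 < 14) (h3 : a3 < 14)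
    (h4 : a4 < 14)
    (g1 : adjB a0 a1 = true) (g2 : adjB a1 a2 = true) (g3 : adjB a2 a3 = true)
    (g4 : adjB a3 a4 = true)
    (hinv : ∀ i < 14, FB a0 a1 a2 a3 a4 (FB a0 a1 a2 a3 a4 i) = i)
    (hfix : ∃ x, x < 14 ∧ FB a0 a1 a2 a3 a4 x = x) :
    ∃ a b, a < 14 ∧ b < 14 ∧ a ≠ b ∧ FB a0 a1 a2 a3 a4 a = a ∧ FB a0 a1 a2 a3 a4 b = b ∧
      (∀ x, x < 14 → adjB a x = true → FB a0 a1 a2 a3 a4 x = x) ∧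
      (∀ x, x < 14 → adjB b x = true → FB a0 a1 a2 a3 a4 x = x) := by
  have hk := keyB_true
  simp only [keyB, rng, List.all_eq_true, List.any_eq_true, Bool.or_eq_true,
    Bool.not_eq_true', Bool.and_eq_true, beq_iff_eq, bne_iff_ne, List.mem_range] at hk
  rcases hk a0 h0 a1 h1 with hbad | hk1
  · rw [g1] at hbad; cases hbad
  rcases hk1 a2 h2 with hbad | hk2
  · rw [g2] at hbad; cases hbad
  rcases hk2 a3 h3 with hbad | hk3
  · rw [g3] at hbad; cases hbad
  rcases hk3 a4 h4 with hbad | hk4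
  · rw [g4] at hbad; cases hbad
  rcases hk4 with (hbad | hbad) | hk6
  · exfalso
    have hgood : (List.range 14).all
        (fun i => FB a0 a1 a2 a3 a4 (FB a0 a1 a2 a3 a4 i) == i) = true := by
      rw [List.all_eq_true]
      intro x hx
      rw [beq_iff_eq]
      exact hinv x (List.mem_range.mp hx)
    rw [hgood] at hbad; cases hbad
  · exfalso
    obtain ⟨x, hx, hfx⟩ := hfix
    have hgood : (List.range 14).any (fun x => FB a0 a1 a2 a3 a4 x == x) = true := by
      rw [List.any_eq_true]
      exact ⟨x, List.mem_range.mpr hx, by rw [beq_iff_eq]; exact hfx⟩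
    rw [hgood] at hbad; cases hbad
  obtain ⟨a, ha14, b, hb14, ⟨⟨⟨hab, hfa⟩, hfb⟩, hAa⟩, hAb⟩ := hk6
  refine ⟨a, b, ha14, hb14, hab, hfa, hfb, ?_, ?_⟩
  · intro x hx hadjx
    rcases hAa x hx with hbad | hgood
    · rw [hadjx] at hbad; cases hbad
    · exact hgood
  · intro x hx hadjx
    rcases hAb x hx with hbad | hgood
    · rw [hadjx] at hbad; cases hbad
    · exact hgood

/-! ### Bridges between the boolean model and `heawood` -/

set_option maxHeartbeats 2000000

lemma hadjB_iff : ∀ i j : ZMod 14, heawood.Adj i j ↔ adjB i.val j.val = true := by decide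

lemma ucnB_spec : ∀ x c y : ZMod 14, heawood.Adj x c → heawood.Adj c y → x ≠ y →
    ucnB x.val y.val = c.val := by decide

lemma t3B_spec : ∀ v a b c : ZMod 14, heawood.Adj v a → heawood.Adj v b → heawood.Adj v c →
    a ≠ b → a ≠ c → b ≠ c → t3B v.val a.val b.val = c.val := by decide

lemma no4 : ∀ x y p q : ZMod 14, x ≠ y → p ≠ q → heawood.Adj x p → heawood.Adj x q →
    heawood.Adj y p → heawood.Adj y q → False := by decide

def chd (v : ZMod 14) : ZMod 14 := if v.val % 2 = 0 then v + 5 else v - 5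

lemma nbr_char : ∀ a x : ZMod 14, heawood.Adj a x ↔ (x = a + 1 ∨ x = a - 1 ∨ x = chd a) := by
  decide

lemma nbr_ne : ∀ a : ZMod 14, a + 1 ≠ a - 1 ∧ a + 1 ≠ chd a ∧ a - 1 ≠ chd a ∧
    a + 1 ≠ a ∧ a - 1 ≠ a ∧ chd a ≠ a := by decide

/-! ### Walk lemmas -/

open SimpleGraph

variable {V : Type*} {G : SimpleGraph V}

lemma getVert_mem_edges {u v : V} (w : G.Walk u v) :
    ∀ i, i < w.length → s(w.getVert i, w.getVert (i+1)) ∈ w.edges := by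
  induction w with
  | nil => intro i hi; simp at hi
  | cons h p ih =>
    intro i hi
    cases i with
    | zero =>
      rw [Walk.edges_cons]
      have h2 : (Walk.cons h p).getVert 1 = p.getVert 0 := rfl
      rw [Walk.getVert_zero, h2, Walk.getVert_zero]
      exact List.mem_cons_self
    | succ i =>
      rw [Walk.edges_cons, Walk.getVert_cons_succ, Walk.getVert_cons_succ]
      exact List.mem_cons_of_mem _ (ih i (by simpa [Walk.length_cons] using hi))

lemma edges_index {u v : V} (w : G.Walk u v) :
    ∀ e ∈ w.edges, ∃ i, i < w.length ∧ e = s(w.getVert i, w.getVert (i+1)) := by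
  induction w with
  | nil => simp
  | cons h p ih =>
    intro e he
    rw [Walk.edges_cons, List.mem_cons] at he
    rcases he with rfl | he
    · refine ⟨0, by simp [Walk.length_cons], ?_⟩
      have h2 : (Walk.cons h p).getVert 1 = p.getVert 0 := rfl
      rw [Walk.getVert_zero, h2, Walk.getVert_zero]
    · obtain ⟨i, hi, hei⟩ := ih e he
      refine ⟨i+1, by simp only [Walk.length_cons]; omega, ?_⟩
      rw [Walk.getVert_cons_succ, Walk.getVert_cons_succ]
      exact hei

lemma support_getElem? {u v : V} (w : G.Walk u v) :
    ∀ i, i ≤ w.length → w.support[i]? = some (w.getVert i) := by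
  induction w with
  | nil =>
    intro i hi
    have h0 : i = 0 := by simpa using hi
    subst h0
    simp [Walk.support_nil, Walk.getVert_zero]
  | cons h p ih =>
    intro i hi
    cases i with
    | zero => simp [Walk.support_cons, Walk.getVert_zero]
    | succ i =>
      rw [Walk.support_cons, List.getElem?_cons_succ, Walk.getVert_cons_succ]
      exact ih i (by simpa [Walk.length_cons] using hi)

lemma cyc_getVert_inj {u : V} {w : G.Walk u u} (hc : w.IsCycle) :
    ∀ i j, 1 ≤ i → i ≤ w.length → 1 ≤ j → j ≤ w.length → w.getVert i = w.getVert j → i = j := by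
  intro i j hi1 hi hj1 hj hij
  obtain ⟨i', rfl⟩ : ∃ i', i = i' + 1 := ⟨i - 1, by omega⟩
  obtain ⟨j', rfl⟩ : ∃ j', j = j' + 1 := ⟨j - 1, by omega⟩
  have hsupp := w.support_eq_cons
  have h1 : w.support.tail[i']? = some (w.getVert (i'+1)) := by
    have hh := support_getElem? w (i'+1) hi
    rw [hsupp, List.getElem?_cons_succ] at hh
    exact hh
  have h2 : w.support.tail[j']? = some (w.getVert (j'+1)) := by
    have hh := support_getElem? w (j'+1) hj
    rw [hsupp, List.getElem?_cons_succ] at hh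
    exact hh
  have hlen : w.support.tail.length = w.length := by
    have hl := w.length_support
    have hlt := w.support.length_tail
    omega
  have h3 : w.support.tail[i']? = w.support.tail[j']? := by rw [h1, h2, hij]
  have : i' = j' :=
    (List.getElem?_inj (by omega : i' < w.support.tail.length) hc.support_nodup).mp h3
  omega

/-! ### Building the cyclic indexing of an invariant cycle -/

lemma buildU {n : ℕ} (hn : 1 < n) {v : ZMod 14} (w : heawood.Walk v v) (hc : w.IsCycle)
    (hlen : w.length = n) :
    ∃ U : ZMod n → ZMod 14, Function.Injective U ∧
      (∀ i : ZMod n, heawood.Adj (U i) (U (i+1))) ∧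
      (∀ i : ZMod n, s(U i, U (i+1)) ∈ w.edges.toFinset) ∧
      (∀ e ∈ w.edges.toFinset, ∃ i : ZMod n, e = s(U i, U (i+1))) := by
  haveI : NeZero n := ⟨by omega⟩
  haveI : Fact (1 < n) := ⟨hn⟩
  have hvl : ∀ i : ZMod n, i.val < w.length := by
    intro i; rw [hlen]; exact ZMod.val_lt i
  have hstep : ∀ i : ZMod n, w.getVert ((i+1 : ZMod n)).val = w.getVert (i.val + 1) := by
    intro i
    have hv : ((i+1 : ZMod n)).val = (i.val + 1) % n := by rw [ZMod.val_add, ZMod.val_one]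
    rcases lt_or_ge (i.val + 1) n with h | h
    · rw [hv, Nat.mod_eq_of_lt h]
    · have he : i.val + 1 = n := by have := ZMod.val_lt i; omega
      have hgl : w.getVert n = v := by rw [← hlen]; exact w.getVert_length
      rw [hv, he, Nat.mod_self, Walk.getVert_zero, hgl]
  refine ⟨fun i => w.getVert i.val, ?_, ?_, ?_, ?_⟩
  · intro i j hij
    simp only at hij
    rcases Nat.eq_zero_or_pos i.val with hi0 | hi0 <;>
      rcases Nat.eq_zero_or_pos j.val with hj0 | hj0
    · exact ZMod.val_injective n (by rw [hi0, hj0])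
    · exfalso
      have hgl : w.getVert w.length = v := w.getVert_length
      rw [hi0, Walk.getVert_zero] at hij
      have heq : w.length = j.val := cyc_getVert_inj hc w.length j.val
        (by have := hc.three_le_length; omega) le_rfl hj0 (le_of_lt (hvl j))
        (hgl.trans hij)
      have := hvl j; omega
    · exfalso
      have hgl : w.getVert w.length = v := w.getVert_length
      rw [hj0, Walk.getVert_zero] at hij
      have heq : i.val = w.length := cyc_getVert_inj hc i.val w.length hi0 (le_of_lt (hvl i))
        (by have := hc.three_le_length; omega) le_rfl (hij.trans hgl.symm)
      have := hvl i; omega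
    · exact ZMod.val_injective n
        (cyc_getVert_inj hc i.val j.val hi0 (le_of_lt (hvl i)) hj0 (le_of_lt (hvl j)) hij)
  · intro i
    simp only
    rw [hstep i]
    exact w.adj_getVert_succ (hvl i)
  · intro i
    simp only
    rw [hstep i, List.mem_toFinset]
    exact getVert_mem_edges w i.val (hvl i)
  · intro e he
    obtain ⟨k, hk, hek⟩ := edges_index w e (List.mem_toFinset.mp he)
    have hkn : k < n := by rw [← hlen]; exact hk
    refine ⟨(k : ZMod n), ?_⟩
    have hkv : ((k : ℕ) : ZMod n).val = k := ZMod.val_cast_of_lt hkn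
    simp only
    rw [hstep, hkv]
    exact hek

/-! ### The rotation/reflection dichotomy -/

lemma dichotomy {n : ℕ} [NeZero n] (hn2 : (2 : ZMod n) ≠ 0)
    (α : heawood ≃g heawood) (s : Finset (Sym2 (ZMod 14)))
    (U : ZMod n → ZMod 14)
    (hUinj : Function.Injective U)
    (hU : ∀ i : ZMod n, s(U i, U (i+1)) ∈ s)
    (hmem : ∀ e ∈ s, ∃ i : ZMod n, e = s(U i, U (i+1)))
    (hs : ∀ e ∈ s, Sym2.map (⇑α) e ∈ s) :
    (∃ c, ∀ i, α (U i) = U (i + c)) ∨ (∃ c, ∀ i, α (U i) = U (c - i)) := by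
  have hainj : Function.Injective (⇑α) := EquivLike.injective α
  have himg : ∀ i : ZMod n, ∃ m : ZMod n,
      (α (U i) = U m ∧ α (U (i+1)) = U (m+1)) ∨ (α (U i) = U (m+1) ∧ α (U (i+1)) = U m) := by
    intro i
    have h1 := hs _ (hU i)
    rw [Sym2.map_pair_eq] at h1
    obtain ⟨m, hm⟩ := hmem _ h1
    rw [Sym2.eq_iff] at hm
    exact ⟨m, hm⟩
  obtain ⟨m, hm0⟩ := himg 0
  rcases hm0 with ⟨hb0, hb1⟩ | ⟨hb0, hb1⟩
  · left
    refine ⟨m, ?_⟩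
    rw [zero_add] at hb1
    have main : ∀ k : ℕ, α (U (k : ZMod n)) = U ((k : ZMod n) + m) ∧
        α (U ((k : ZMod n) + 1)) = U (((k : ZMod n) + 1) + m) := by
      intro k
      induction k with
      | zero =>
        simp only [Nat.cast_zero, zero_add]
        exact ⟨hb0, by rw [add_comm 1 m]; exact hb1⟩
      | succ k ih =>
        have hcast : ((k+1 : ℕ) : ZMod n) = (k : ZMod n) + 1 := by push_cast; ring
        rw [hcast]
        refine ⟨ih.2, ?_⟩
        obtain ⟨m', hm'⟩ := himg ((k : ZMod n) + 1)
        rcases hm' with ⟨h1, h2⟩ | ⟨h1, h2⟩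
        · have hmeq : m' = (k : ZMod n) + 1 + m := hUinj (h1.symm.trans ih.2)
          rw [hmeq] at h2
          rw [h2]
          exact congrArg U (by ring)
        · exfalso
          have hmeq : m' + 1 = (k : ZMod n) + 1 + m := hUinj (h1.symm.trans ih.2)
          have hm'' : m' = (k : ZMod n) + m := by
            have h' : m' + 1 = ((k : ZMod n) + m) + 1 := by rw [hmeq]; ring
            exact add_right_cancel h'
          have hxx : α (U ((k : ZMod n) + 1 + 1)) = α (U (k : ZMod n)) := by
            rw [h2, hm'', ih.1]
          have h4 : (k : ZMod n) + 1 + 1 = (k : ZMod n) := hUinj (hainj hxx)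
          exact hn2 (by linear_combination h4)
    intro i
    have h := (main i.val).1
    rwa [ZMod.natCast_rightInverse i] at h
  · right
    refine ⟨m + 1, ?_⟩
    rw [zero_add] at hb1
    have hb0' : α (U 0) = U (m + 1 - 0) := by rw [sub_zero]; exact hb0
    have hb1' : α (U 1) = U (m + 1 - 1) := by rw [add_sub_cancel_right]; exact hb1
    have main : ∀ k : ℕ, α (U (k : ZMod n)) = U (m + 1 - k) ∧
        α (U ((k : ZMod n) + 1)) = U (m + 1 - ((k : ZMod n) + 1)) := by
      intro k
      induction k with
      | zero =>
        simp only [Nat.cast_zero, zero_add]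
        exact ⟨hb0', by simpa using hb1'⟩
      | succ k ih =>
        have hcast : ((k+1 : ℕ) : ZMod n) = (k : ZMod n) + 1 := by push_cast; ring
        rw [hcast]
        refine ⟨ih.2, ?_⟩
        obtain ⟨m', hm'⟩ := himg ((k : ZMod n) + 1)
        rcases hm' with ⟨h1, h2⟩ | ⟨h1, h2⟩
        · exfalso
          have hmeq : m' = m + 1 - ((k : ZMod n) + 1) := hUinj (h1.symm.trans ih.2)
          have hxx : α (U ((k : ZMod n) + 1 + 1)) = α (U (k : ZMod n)) := by
            rw [h2, hmeq, ih.1]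
            exact congrArg U (by ring)
          have h4 : (k : ZMod n) + 1 + 1 = (k : ZMod n) := hUinj (hainj hxx)
          exact hn2 (by linear_combination h4)
        · have hmeq : m' + 1 = m + 1 - ((k : ZMod n) + 1) := hUinj (h1.symm.trans ih.2)
          have hm'' : m' = m + 1 - ((k : ZMod n) + 1 + 1) := by
            have h' : m' + 1 = (m + 1 - ((k : ZMod n) + 1 + 1)) + 1 := by rw [hmeq]; ring
            exact add_right_cancel h'
          rw [h2, hm'']
    intro i
    have h := (main i.val).1
    rwa [ZMod.natCast_rightInverse i] at h

end HeawoodProof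

open HeawoodProof

set_option maxHeartbeats 1000000 in
/-- If an automorphism of the Heawood graph has order 2 and setwise fixes some 12-cycle
or some 14-cycle, then it fixes no vertex. -/
theorem heawood_order_two_invariant_cycle_no_fixed_vertex (α : heawood ≃g heawood)
    (hα : orderOf α = 2)
    (h : ∃ s, (s ∈ cycleEdgeSets heawood 12 ∨ s ∈ cycleEdgeSets heawood 14) ∧
      s.image (Sym2.map ⇑α) = s) :
    ∀ v : ZMod 14, α v ≠ v := by
  intro v₀ hv₀
  -- basic facts about `α`
  have hadj : ∀ i j : ZMod 14, heawood.Adj i j → heawood.Adj (α i) (α j) :=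
    fun i j hij => α.map_rel_iff.mpr hij
  have hainj : Function.Injective (⇑α) := EquivLike.injective α
  have hne : ∀ i j : ZMod 14, i ≠ j → α i ≠ α j := fun i j hij he => hij (hainj he)
  have hαα : ∀ x, α (α x) = x := by
    have h2 : α * α = 1 := by
      have hp := pow_orderOf_eq_one α
      rwa [hα, pow_two] at hp
    intro x
    calc α (α x) = (α * α) x := rfl
    _ = (1 : heawood ≃g heawood) x := by rw [h2]
    _ = x := rfl
  have hz : ∃ z, α z ≠ z := by
    by_contra hcon
    push_neg at hcon
    have h1 : α = 1 := RelIso.ext hcon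
    rw [h1, orderOf_one] at hα
    exact absurd hα (by norm_num)
  have hval : ∀ k : ZMod 14, k.val < 14 := fun k => ZMod.val_lt k
  -- the extension equations
  have e5 : ucnB (α 0).val (α 4).val = (α 5).val :=
    ucnB_spec (α 0) (α 5) (α 4) (hadj _ _ (by decide)) (hadj _ _ (by decide))
      (hne _ _ (by decide))
  have e10 : t3B (α 1).val (α 0).val (α 2).val = (α 10).val :=
    t3B_spec (α 1) (α 0) (α 2) (α 10) (hadj _ _ (by decide)) (hadj _ _ (by decide))
      (hadj _ _ (by decide)) (hne _ _ (by decide)) (hne _ _ (by decide)) (hne _ _ (by decide))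
  have e7 : t3B (α 2).val (α 1).val (α 3).val = (α 7).val :=
    t3B_spec (α 2) (α 1) (α 3) (α 7) (hadj _ _ (by decide)) (hadj _ _ (by decide))
      (hadj _ _ (by decide)) (hne _ _ (by decide)) (hne _ _ (by decide)) (hne _ _ (by decide))
  have e12 : t3B (α 3).val (α 2).val (α 4).val = (α 12).val :=
    t3B_spec (α 3) (α 2) (α 4) (α 12) (hadj _ _ (by decide)) (hadj _ _ (by decide))
      (hadj _ _ (by decide)) (hne _ _ (by decide)) (hne _ _ (by decide)) (hne _ _ (by decide))
  have e6 : ucnB (ucnB (α 0).val (α 4).val) (t3B (α 2).val (α 1).val (α 3).val)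
      = (α 6).val := by
    rw [e5, e7]
    exact ucnB_spec (α 5) (α 6) (α 7) (hadj _ _ (by decide)) (hadj _ _ (by decide))
      (hne _ _ (by decide))
  have e11 : ucnB (t3B (α 1).val (α 0).val (α 2).val) (t3B (α 3).val (α 2).val (α 4).val)
      = (α 11).val := by
    rw [e10, e12]
    exact ucnB_spec (α 10) (α 11) (α 12) (hadj _ _ (by decide)) (hadj _ _ (by decide))
      (hne _ _ (by decide))
  have e13 : ucnB (t3B (α 3).val (α 2).val (α 4).val) (α 0).val = (α 13).val := by
    rw [e12]
    exact ucnB_spec (α 12) (α 13) (α 0) (hadj _ _ (by decide)) (hadj _ _ (by decide))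
      (hne _ _ (by decide))
  have e9 : ucnB (α 4).val (t3B (α 1).val (α 0).val (α 2).val) = (α 9).val := by
    rw [e10]
    exact ucnB_spec (α 4) (α 9) (α 10) (hadj _ _ (by decide)) (hadj _ _ (by decide))
      (hne _ _ (by decide))
  have e8 : ucnB (t3B (α 2).val (α 1).val (α 3).val)
      (ucnB (t3B (α 3).val (α 2).val (α 4).val) (α 0).val) = (α 8).val := by
    rw [e7, e13]
    exact ucnB_spec (α 7) (α 8) (α 13) (hadj _ _ (by decide)) (hadj _ _ (by decide))
      (hne _ _ (by decide))
  have hFB : ∀ k : ZMod 14,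
      FB (α 0).val (α 1).val (α 2).val (α 3).val (α 4).val k.val = (α k).val := by
    have hall : ∀ k : ZMod 14, k = 0 ∨ k = 1 ∨ k = 2 ∨ k = 3 ∨ k = 4 ∨ k = 5 ∨ k = 6 ∨
        k = 7 ∨ k = 8 ∨ k = 9 ∨ k = 10 ∨ k = 11 ∨ k = 12 ∨ k = 13 := by decide
    intro k
    rcases hall k with rfl|rfl|rfl|rfl|rfl|rfl|rfl|rfl|rfl|rfl|rfl|rfl|rfl|rfl
    exacts [rfl, rfl, rfl, rfl, rfl, e5, e6, e7, e8, e9, e10, e11, e12, e13]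
  -- apply the key lemma
  have hinvFB : ∀ i < 14, FB (α 0).val (α 1).val (α 2).val (α 3).val (α 4).val
      (FB (α 0).val (α 1).val (α 2).val (α 3).val (α 4).val i) = i := by
    intro i hi
    have hk : ((i : ℕ) : ZMod 14).val = i := ZMod.val_cast_of_lt hi
    rw [← hk, hFB, hFB, hαα]
  have hfixFB : ∃ x, x < 14 ∧
      FB (α 0).val (α 1).val (α 2).val (α 3).val (α 4).val x = x := by
    refine ⟨v₀.val, hval v₀, ?_⟩
    have hh := hFB v₀
    rw [hv₀] at hh
    exact hh
  obtain ⟨a', b', ha14, hb14, hab', hfa', hfb', hAa', hAb'⟩ :=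
    key' (α 0).val (α 1).val (α 2).val (α 3).val (α 4).val
      (hval _) (hval _) (hval _) (hval _) (hval _)
      ((hadjB_iff _ _).mp (hadj _ _ (by decide))) ((hadjB_iff _ _).mp (hadj _ _ (by decide)))
      ((hadjB_iff _ _).mp (hadj _ _ (by decide))) ((hadjB_iff _ _).mp (hadj _ _ (by decide)))
      hinvFB hfixFB
  set A : ZMod 14 := (a' : ZMod 14) with hA
  set B : ZMod 14 := (b' : ZMod 14) with hB
  have hAv : A.val = a' := ZMod.val_cast_of_lt ha14
  have hBv : B.val = b' := ZMod.val_cast_of_lt hb14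
  have hfixA : α A = A := by
    have hh := hFB A
    rw [hAv, hfa'] at hh
    exact ZMod.val_injective 14 (by rw [← hh, hAv])
  have hfixB : α B = B := by
    have hh := hFB B
    rw [hBv, hfb'] at hh
    exact ZMod.val_injective 14 (by rw [← hh, hBv])
  have hAB : A ≠ B := fun he => hab' (by rw [← hAv, ← hBv, he])
  have hAnb : ∀ x : ZMod 14, heawood.Adj A x → α x = x := by
    intro x hx
    have hb := hAa' x.val (hval x) (by rw [← hAv]; exact (hadjB_iff A x).mp hx)
    rw [hFB x] at hb
    exact ZMod.val_injective 14 hb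
  have hBnb : ∀ x : ZMod 14, heawood.Adj B x → α x = x := by
    intro x hx
    have hb := hAb' x.val (hval x) (by rw [← hBv]; exact (hadjB_iff B x).mp hx)
    rw [hFB x] at hb
    exact ZMod.val_injective 14 hb
  -- the invariant cycle
  obtain ⟨s, hcyc, himg⟩ := h
  have hsmap : ∀ e ∈ s, Sym2.map (⇑α) e ∈ s := by
    intro e he
    rw [← himg]
    exact Finset.mem_image_of_mem _ he
  rcases hcyc with hc12 | hc14
  · -- a 12-cycle
    obtain ⟨v, w, hc, hlen, hedges⟩ := hc12
    obtain ⟨U, hUinj, hUadj, hUedge, hUmem⟩ := buildU (by norm_num) w hc hlen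
    rw [hedges] at hUedge hUmem
    -- the image of `U` as a finset
    set R : Finset (ZMod 14) := Finset.univ.image U with hR
    have hRcard : R.card = 12 := by
      rw [hR, Finset.card_image_of_injective _ hUinj, Finset.card_univ, ZMod.card]
    have hRc : Rᶜ.card = 2 := by
      rw [Finset.card_compl, hRcard, ZMod.card]
    have hmemR : ∀ x : ZMod 14, x ∈ R ↔ ∃ i, U i = x := by
      intro x
      rw [hR]
      simp [Finset.mem_image]
    rcases dichotomy (by decide) α s U hUinj hUedge hUmem hsmap with ⟨c, hrot⟩ | ⟨c, hrefl⟩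
    · -- rotation case
      have h2c : c + c = 0 := by
        have h1 := hαα (U 0)
        rw [hrot, hrot] at h1
        have h3 := hUinj h1
        linear_combination h3
      have hc06 : c = 0 ∨ c = 6 := by
        have hh : ∀ c : ZMod 12, c + c = 0 → c = 0 ∨ c = 6 := by decide
        exact hh c h2c
      rcases hc06 with rfl | rfl
      · -- identity on the cycle
        have hfixU : ∀ i, α (U i) = U i := by
          intro i
          have hh := hrot i
          rwa [add_zero] at hh
        obtain ⟨z, hzne⟩ := hz
        have hzR : z ∉ R := by
          intro hzR
          obtain ⟨i, rfl⟩ := (hmemR z).mp hzR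
          exact hzne (hfixU i)
        have hazR : α z ∉ R := by
          intro haR
          obtain ⟨i, hi⟩ := (hmemR _).mp haR
          have h3 : α (α z) = α z := by rw [← hi]; exact hfixU i
          exact hzne ((hαα z).symm.trans h3).symm
        have hsub : ({z, α z} : Finset (ZMod 14)) ⊆ Rᶜ := by
          intro x hx
          rw [Finset.mem_insert, Finset.mem_singleton] at hx
          rcases hx with rfl | rfl
          · exact Finset.mem_compl.mpr hzR
          · exact Finset.mem_compl.mpr hazR
        have hceq : ({z, α z} : Finset (ZMod 14)) = Rᶜ :=
          Finset.eq_of_subset_of_card_le hsub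
            (by rw [hRc, Finset.card_pair (fun he => hzne he.symm)])
        have hnotR : ∀ x : ZMod 14, x ∉ R → x = z ∨ x = α z := by
          intro x hx
          have hh : x ∈ ({z, α z} : Finset (ZMod 14)) := by
            rw [hceq]; exact Finset.mem_compl.mpr hx
          simpa using hh
        obtain ⟨hd1, hd2, hd3, hd4, hd5, hd6⟩ := nbr_ne z
        have haz1 : heawood.Adj z (z+1) := (nbr_char z (z+1)).mpr (Or.inl rfl)
        have haz2 : heawood.Adj z (z-1) := (nbr_char z (z-1)).mpr (Or.inr (Or.inl rfl))
        have haz3 : heawood.Adj z (chd z) := (nbr_char z (chd z)).mpr (Or.inr (Or.inr rfl))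
        have htri : ∀ x, heawood.Adj z x → x ∉ R → x = α z := by
          intro x hx hxR
          rcases hnotR x hxR with hx1 | hx1
          · rw [hx1] at hx; exact absurd hx (heawood.loopless.irrefl _)
          · exact hx1
        have hpick : ∃ p q : ZMod 14, p ≠ q ∧ p ∈ R ∧ q ∈ R ∧
            heawood.Adj z p ∧ heawood.Adj z q := by
          by_cases h1 : (z+1) ∈ R
          · by_cases h2 : (z-1) ∈ R
            · exact ⟨z+1, z-1, hd1, h1, h2, haz1, haz2⟩
            · by_cases h3 : chd z ∈ R
              · exact ⟨z+1, chd z, hd2, h1, h3, haz1, haz3⟩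
              · exact absurd ((htri _ haz2 h2).trans (htri _ haz3 h3).symm) hd3
          · by_cases h2 : (z-1) ∈ R
            · by_cases h3 : chd z ∈ R
              · exact ⟨z-1, chd z, hd3, h2, h3, haz2, haz3⟩
              · exact absurd ((htri _ haz1 h1).trans (htri _ haz3 h3).symm) hd2
            · exact absurd ((htri _ haz1 h1).trans (htri _ haz2 h2).symm) hd1
        obtain ⟨p, q, hpq, hpR, hqR, hzp, hzq⟩ := hpick
        have hpfix : α p = p := by
          obtain ⟨i, rfl⟩ := (hmemR p).mp hpR; exact hfixU i
        have hqfix : α q = q := by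
          obtain ⟨i, rfl⟩ := (hmemR q).mp hqR; exact hfixU i
        have h1 : heawood.Adj (α z) p := by
          have hh := hadj _ _ hzp; rwa [hpfix] at hh
        have h2 : heawood.Adj (α z) q := by
          have hh := hadj _ _ hzq; rwa [hqfix] at hh
        exact no4 z (α z) p q (fun he => hzne he.symm) hpq hzp hzq h1 h2
      · -- rotation by 6
        have hAoff : A ∉ R := by
          intro hAR
          obtain ⟨i, hi⟩ := (hmemR A).mp hAR
          have h1 : U (i + 6) = U i := by
            rw [← hrot i, hi, hfixA]
          have h3 := hUinj h1
          exact absurd (show (6 : ZMod 12) = 0 by linear_combination h3) (by decide)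
        obtain ⟨hd1, hd2, hd3, hd4, hd5, hd6⟩ := nbr_ne A
        have haA1 : heawood.Adj A (A+1) := (nbr_char A (A+1)).mpr (Or.inl rfl)
        have haA2 : heawood.Adj A (A-1) := (nbr_char A (A-1)).mpr (Or.inr (Or.inl rfl))
        have haA3 : heawood.Adj A (chd A) := (nbr_char A (chd A)).mpr (Or.inr (Or.inr rfl))
        have hBoff : B ∉ R := by
          intro hBR
          obtain ⟨i, hi⟩ := (hmemR B).mp hBR
          have h1 : U (i + 6) = U i := by
            rw [← hrot i, hi, hfixB]
          have h3 := hUinj h1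
          exact absurd (show (6 : ZMod 12) = 0 by linear_combination h3) (by decide)
        have hsub : ({A, B} : Finset (ZMod 14)) ⊆ Rᶜ := by
          intro x hx
          rw [Finset.mem_insert, Finset.mem_singleton] at hx
          rcases hx with rfl | rfl
          · exact Finset.mem_compl.mpr hAoff
          · exact Finset.mem_compl.mpr hBoff
        have hceq : ({A, B} : Finset (ZMod 14)) = Rᶜ :=
          Finset.eq_of_subset_of_card_le hsub (by rw [hRc, Finset.card_pair hAB])
        have hnotR : ∀ x : ZMod 14, x ∉ R → x = A ∨ x = B := by
          intro x hx
          have hh : x ∈ ({A, B} : Finset (ZMod 14)) := by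
            rw [hceq]; exact Finset.mem_compl.mpr hx
          simpa using hh
        have htri : ∀ x, heawood.Adj A x → x ∉ R → x = B := by
          intro x hx hxR
          rcases hnotR x hxR with hx1 | hx1
          · rw [hx1] at hx; exact absurd hx (heawood.loopless.irrefl _)
          · exact hx1
        have hpick : ∃ p, p ∈ R ∧ heawood.Adj A p := by
          by_cases h1 : (A+1) ∈ R
          · exact ⟨_, h1, haA1⟩
          by_cases h2 : (A-1) ∈ R
          · exact ⟨_, h2, haA2⟩
          exact absurd ((htri _ haA1 h1).trans (htri _ haA2 h2).symm) hd1
        obtain ⟨p, hpR, hAp⟩ := hpick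
        obtain ⟨i, hi⟩ := (hmemR p).mp hpR
        have hpfix : α p = p := hAnb p hAp
        have h1 : U (i + 6) = U i := by rw [← hrot i, hi, hpfix]
        have h3 := hUinj h1
        exact absurd (show (6 : ZMod 12) = 0 by linear_combination h3) (by decide)
    · -- reflection case
      have hfixed_idx : ∀ i : ZMod 12, α (U i) = U i → i + i = c := by
        intro i hfix
        have h1 := hrefl i
        rw [hfix] at h1
        have h2 := hUinj h1
        linear_combination h2
      have hAoff : A ∉ R := by
        intro hAR
        obtain ⟨i, hi⟩ := (hmemR A).mp hAR
        have f1 : i + i = c := hfixed_idx i (by rw [hi, hfixA])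
        have hadjnext : heawood.Adj A (U (i+1)) := by rw [← hi]; exact hUadj i
        have f2 : (i+1) + (i+1) = c := hfixed_idx (i+1) (hAnb _ hadjnext)
        exact absurd (show (2 : ZMod 12) = 0 by linear_combination f2 - f1) (by decide)
      have hBoff : B ∉ R := by
        intro hBR
        obtain ⟨i, hi⟩ := (hmemR B).mp hBR
        have f1 : i + i = c := hfixed_idx i (by rw [hi, hfixB])
        have hadjnext : heawood.Adj B (U (i+1)) := by rw [← hi]; exact hUadj i
        have f2 : (i+1) + (i+1) = c := hfixed_idx (i+1) (hBnb _ hadjnext)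
        exact absurd (show (2 : ZMod 12) = 0 by linear_combination f2 - f1) (by decide)
      have hsub : ({A, B} : Finset (ZMod 14)) ⊆ Rᶜ := by
        intro x hx
        rw [Finset.mem_insert, Finset.mem_singleton] at hx
        rcases hx with rfl | rfl
        · exact Finset.mem_compl.mpr hAoff
        · exact Finset.mem_compl.mpr hBoff
      have hceq : ({A, B} : Finset (ZMod 14)) = Rᶜ :=
        Finset.eq_of_subset_of_card_le hsub (by rw [hRc, Finset.card_pair hAB])
      have hnotR : ∀ x : ZMod 14, x ∉ R → x = A ∨ x = B := by
        intro x hx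
        have hh : x ∈ ({A, B} : Finset (ZMod 14)) := by
          rw [hceq]; exact Finset.mem_compl.mpr hx
        simpa using hh
      -- two neighbours of A in R
      have hpickA : ∃ p q : ZMod 14, p ≠ q ∧ p ∈ R ∧ q ∈ R ∧
          heawood.Adj A p ∧ heawood.Adj A q := by
        obtain ⟨hd1, hd2, hd3, hd4, hd5, hd6⟩ := nbr_ne A
        have haA1 : heawood.Adj A (A+1) := (nbr_char A (A+1)).mpr (Or.inl rfl)
        have haA2 : heawood.Adj A (A-1) := (nbr_char A (A-1)).mpr (Or.inr (Or.inl rfl))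
        have haA3 : heawood.Adj A (chd A) := (nbr_char A (chd A)).mpr (Or.inr (Or.inr rfl))
        have htri : ∀ x, heawood.Adj A x → x ∉ R → x = B := by
          intro x hx hxR
          rcases hnotR x hxR with hx1 | hx1
          · rw [hx1] at hx; exact absurd hx (heawood.loopless.irrefl _)
          · exact hx1
        by_cases h1 : (A+1) ∈ R
        · by_cases h2 : (A-1) ∈ R
          · exact ⟨A+1, A-1, hd1, h1, h2, haA1, haA2⟩
          · by_cases h3 : chd A ∈ R
            · exact ⟨A+1, chd A, hd2, h1, h3, haA1, haA3⟩
            · exact absurd ((htri _ haA2 h2).trans (htri _ haA3 h3).symm) hd3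
        · by_cases h2 : (A-1) ∈ R
          · by_cases h3 : chd A ∈ R
            · exact ⟨A-1, chd A, hd3, h2, h3, haA2, haA3⟩
            · exact absurd ((htri _ haA1 h1).trans (htri _ haA3 h3).symm) hd2
          · exact absurd ((htri _ haA1 h1).trans (htri _ haA2 h2).symm) hd1
      have hpickB : ∃ p q : ZMod 14, p ≠ q ∧ p ∈ R ∧ q ∈ R ∧
          heawood.Adj B p ∧ heawood.Adj B q := by
        obtain ⟨hd1, hd2, hd3, hd4, hd5, hd6⟩ := nbr_ne B
        have haB1 : heawood.Adj B (B+1) := (nbr_char B (B+1)).mpr (Or.inl rfl)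
        have haB2 : heawood.Adj B (B-1) := (nbr_char B (B-1)).mpr (Or.inr (Or.inl rfl))
        have haB3 : heawood.Adj B (chd B) := (nbr_char B (chd B)).mpr (Or.inr (Or.inr rfl))
        have htri : ∀ x, heawood.Adj B x → x ∉ R → x = A := by
          intro x hx hxR
          rcases hnotR x hxR with hx1 | hx1
          · exact hx1
          · rw [hx1] at hx; exact absurd hx (heawood.loopless.irrefl _)
        by_cases h1 : (B+1) ∈ R
        · by_cases h2 : (B-1) ∈ R
          · exact ⟨B+1, B-1, hd1, h1, h2, haB1, haB2⟩
          · by_cases h3 : chd B ∈ R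
            · exact ⟨B+1, chd B, hd2, h1, h3, haB1, haB3⟩
            · exact absurd ((htri _ haB2 h2).trans (htri _ haB3 h3).symm) hd3
        · by_cases h2 : (B-1) ∈ R
          · by_cases h3 : chd B ∈ R
            · exact ⟨B-1, chd B, hd3, h2, h3, haB2, haB3⟩
            · exact absurd ((htri _ haB1 h1).trans (htri _ haB3 h3).symm) hd2
          · exact absurd ((htri _ haB1 h1).trans (htri _ haB2 h2).symm) hd1
      obtain ⟨p, q, hpq, hpR, hqR, hAp, hAq⟩ := hpickA
      obtain ⟨p', q', hpq', hpR', hqR', hBp', hBq'⟩ := hpickB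
      obtain ⟨ip, hip⟩ := (hmemR p).mp hpR
      obtain ⟨iq, hiq⟩ := (hmemR q).mp hqR
      obtain ⟨jp, hjp⟩ := (hmemR p').mp hpR'
      obtain ⟨jq, hjq⟩ := (hmemR q').mp hqR'
      have fp : ip + ip = c := hfixed_idx ip (by rw [hip]; exact hAnb p hAp)
      have fq : iq + iq = c := hfixed_idx iq (by rw [hiq]; exact hAnb q hAq)
      have fjp : jp + jp = c := hfixed_idx jp (by rw [hjp]; exact hBnb p' hBp')
      have fjq : jq + jq = c := hfixed_idx jq (by rw [hjq]; exact hBnb q' hBq')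
      have hsol : ∀ x y : ZMod 12, x + x = y + y → y = x ∨ y = x + 6 := by decide
      have hiq6 : iq = ip + 6 := by
        rcases hsol ip iq (fp.trans fq.symm) with he | he
        · exact absurd (by rw [← hip, ← hiq, he]) hpq
        · exact he
      have hjpm : p' = p ∨ p' = q := by
        rcases hsol ip jp (fp.trans fjp.symm) with he | he
        · left; rw [← hjp, ← hip, he]
        · right; rw [← hjp, ← hiq, hiq6, he]
      have hjqm : q' = p ∨ q' = q := by
        rcases hsol ip jq (fp.trans fjq.symm) with he | he
        · left; rw [← hjq, ← hip, he]
        · right; rw [← hjq, ← hiq, hiq6, he]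
      have hBpq : heawood.Adj B p ∧ heawood.Adj B q := by
        rcases hjpm with rfl | rfl
        · rcases hjqm with rfl | rfl
          · exact absurd rfl hpq'
          · exact ⟨hBp', hBq'⟩
        · rcases hjqm with rfl | rfl
          · exact ⟨hBq', hBp'⟩
          · exact absurd rfl hpq'
      exact no4 A B p q hAB hpq hAp hAq hBpq.1 hBpq.2
  · -- a 14-cycle
    obtain ⟨v, w, hc, hlen, hedges⟩ := hc14
    obtain ⟨U, hUinj, hUadj, hUedge, hUmem⟩ := buildU (by norm_num) w hc hlen
    rw [hedges] at hUedge hUmem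
    have hUsurj : Function.Surjective U := Finite.injective_iff_surjective.mp hUinj
    rcases dichotomy (by decide) α s U hUinj hUedge hUmem hsmap with ⟨c, hrot⟩ | ⟨c, hrefl⟩
    · have h2c : c + c = 0 := by
        have h1 := hαα (U 0)
        rw [hrot, hrot] at h1
        have h3 := hUinj h1
        linear_combination h3
      have hc07 : c = 0 ∨ c = 7 := by
        have hh : ∀ c : ZMod 14, c + c = 0 → c = 0 ∨ c = 7 := by decide
        exact hh c h2c
      rcases hc07 with rfl | rfl
      · obtain ⟨z, hzne⟩ := hz
        obtain ⟨i, rfl⟩ := hUsurj z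
        have hh := hrot i
        rw [add_zero] at hh
        exact hzne hh
      · obtain ⟨i, hi⟩ := hUsurj v₀
        have h1 : U (i + 7) = U i := by rw [← hrot i, hi, hv₀]
        have h3 := hUinj h1
        exact absurd (show (7 : ZMod 14) = 0 by linear_combination h3) (by decide)
    · -- reflection on a Hamiltonian cycle
      obtain ⟨i, hi⟩ := hUsurj A
      have hfixed_idx : ∀ j : ZMod 14, α (U j) = U j → j + j = c := by
        intro j hfix
        have h1 := hrefl j
        rw [hfix] at h1
        have h2 := hUinj h1
        linear_combination h2
      have f1 : i + i = c := hfixed_idx i (by rw [hi, hfixA])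
      have hadjnext : heawood.Adj A (U (i+1)) := by rw [← hi]; exact hUadj i
      have f2 : (i+1) + (i+1) = c := hfixed_idx (i+1) (hAnb _ hadjnext)
      exact absurd (show (2 : ZMod 14) = 0 by linear_combination f2 - f1) (by decide)
end

section
/- If an automorphism of the Heawood graph has even order and setwise fixes some 14-cycle, then it has order exactly 2. -/
instance inst_s16 : DecidableRel heawood.Adj := fun i j =>
  inferInstanceAs (Decidable (i ≠ j ∧ (j = i + 1 ∨ j = i - 1 ∨
    (i.val % 2 = 0 ∧ j = i + 5) ∨ (i.val % 2 = 1 ∧ j = i - 5))))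

lemma heawood_no4 : ∀ a b c d : ZMod 14, heawood.Adj a b → heawood.Adj b c →
    heawood.Adj c d → heawood.Adj d a → a = c ∨ b = d := by decide

lemma heawood_deg : ∀ x : ZMod 14, heawood.degree x = 3 := by decide

private lemma getVert_eq_support_get {V : Type*} {G : SimpleGraph V} {u v : V}
    (w : G.Walk u v) : ∀ (i : ℕ) (hi : i < w.support.length),
    w.getVert i = w.support.get ⟨i, hi⟩ := by
  induction w with
  | nil =>
    intro i hi
    simp only [SimpleGraph.Walk.support_nil, List.length_singleton] at hi
    interval_cases i
    rfl
  | cons h p ih =>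
    intro i hi
    cases i with
    | zero => rfl
    | succ k =>
      have hk : k < p.support.length := by
        simpa [SimpleGraph.Walk.support_cons] using hi
      simpa [SimpleGraph.Walk.support_cons] using ih k hk

/-- If an automorphism of the Heawood graph has even order and setwise fixes some
14-cycle, then it has order exactly 2. -/
theorem heawood_even_order_invariant_fourteenCycle (α : heawood ≃g heawood)
    (hα : Even (orderOf α))
    (h : ∃ s ∈ cycleEdgeSets heawood 14, s.image (Sym2.map ⇑α) = s) :
    orderOf α = 2 := by
  obtain ⟨s, ⟨v0, w, hcyc, hlen, hedges⟩, hfix⟩ := h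
  have hslen : w.support.length = 15 := by
    rw [SimpleGraph.Walk.length_support, hlen]
  set V : ZMod 14 → ZMod 14 := fun i => w.getVert (i.val + 1) with hVdef
  -- injectivity
  have hVinj : Function.Injective V := by
    intro i j hij
    have hi1 : i.val + 1 < w.support.length := by rw [hslen]; have := i.val_lt; omega
    have hj1 : j.val + 1 < w.support.length := by rw [hslen]; have := j.val_lt; omega
    have hti : i.val < w.support.tail.length := by rw [List.length_tail, hslen]; have := i.val_lt; omega
    have htj : j.val < w.support.tail.length := by rw [List.length_tail, hslen]; have := j.val_lt; omega
    have e1 : V i = w.support.tail.get ⟨i.val, hti⟩ := by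
      rw [hVdef]; simp only []
      rw [getVert_eq_support_get w _ hi1, List.get_tail]
    have e2 : V j = w.support.tail.get ⟨j.val, htj⟩ := by
      rw [hVdef]; simp only []
      rw [getVert_eq_support_get w _ hj1, List.get_tail]
    rw [e1, e2] at hij
    have := (hcyc.support_nodup.get_inj_iff).mp hij
    have hval : i.val = j.val := by simpa using this
    exact ZMod.val_injective _ hval
  -- wraparound
  have hwrap : w.getVert 14 = w.getVert 0 := by
    have h1 : w.getVert w.length = v0 := w.getVert_length
    rw [hlen] at h1
    rw [h1, SimpleGraph.Walk.getVert_zero]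
  -- getVert in terms of V
  have hgv : ∀ i : ℕ, i ≤ 14 → w.getVert i = V ((i : ZMod 14) - 1) := by
    intro i hi
    match i with
    | 0 =>
      have : ((0 : ZMod 14) - 1).val + 1 = 14 := by decide
      rw [hVdef]; simp only []
      rw [Nat.cast_zero, this, hwrap]
    | (k+1) =>
      have hk : k < 14 := by omega
      have : (((k+1 : ℕ) : ZMod 14) - 1).val + 1 = k + 1 := by
        push_cast
        have : ((k : ℕ) : ZMod 14) + 1 - 1 = (k : ZMod 14) := by ring
        rw [this, ZMod.val_natCast, Nat.mod_eq_of_lt hk]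
      rw [hVdef]; simp only []
      rw [this]
  -- adjacency along the cycle
  have hadj : ∀ i : ZMod 14, heawood.Adj (V i) (V (i + 1)) := by
    intro i
    rcases (by decide : ∀ j : ZMod 14, j = 13 ∨ (j + 1).val = j.val + 1) i with h13 | hsucc
    · subst h13
      have e1 : V 13 = w.getVert 0 := by
        rw [hVdef]; simp only []
        rw [(by decide : ((13 : ZMod 14)).val + 1 = 14), hwrap]
      have e2 : V (13 + 1) = w.getVert 1 := by
        rw [(by decide : (13 : ZMod 14) + 1 = 0), hVdef]; simp only []
        rw [(by decide : ((0 : ZMod 14)).val + 1 = 1)]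
      rw [e1, e2]
      exact w.adj_getVert_succ (by omega)
    · have e2 : V (i + 1) = w.getVert (i.val + 1 + 1) := by
        rw [hVdef]; simp only []
        rw [hsucc]
      rw [e2]
      exact w.adj_getVert_succ (by rw [hlen, ← hsucc]; exact (i+1).val_lt)
  -- membership of cycle edges in s
  have hmemN : ∀ m : ℕ, m < 14 → s(w.getVert m, w.getVert (m + 1)) ∈ s := by
    intro m hm
    rw [← hedges, List.mem_toFinset, ← SimpleGraph.Walk.mem_edges_toSubgraph,
      SimpleGraph.Subgraph.mem_edgeSet]
    exact w.toSubgraph_adj_getVert (by omega)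
  have hmem : ∀ j : ZMod 14, s(V j, V (j + 1)) ∈ s := by
    intro j
    have hv : ((j + 1).val : ZMod 14) = j + 1 := by
      rw [ZMod.natCast_val, ZMod.cast_id]
    have e1 : w.getVert ((j+1).val) = V j := by
      rw [hgv _ (by have := (j+1).val_lt; omega), hv]
      congr 1; ring
    have e2 : w.getVert ((j+1).val + 1) = V (j + 1) := by
      rcases Nat.lt_or_ge ((j+1).val) 14 with hlt | hge
      · rw [hgv _ (by omega)]
        congr 1
        push_cast [hv]
        ring
      · exact absurd (j+1).val_lt (by omega)
    rw [← e1, ← e2]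
    exact hmemN _ (j+1).val_lt
  -- characterization of edges of s
  have hchar : ∀ a b : ZMod 14, s(V a, V b) ∈ s → b = a + 1 ∨ a = b + 1 := by
    intro a b hab
    rw [← hedges, List.mem_toFinset, ← SimpleGraph.Walk.mem_edges_toSubgraph,
      SimpleGraph.Subgraph.mem_edgeSet, SimpleGraph.Walk.toSubgraph_adj_iff] at hab
    obtain ⟨i, hi, hilen⟩ := hab
    rw [hlen] at hilen
    have e1 : w.getVert i = V ((i : ZMod 14) - 1) := hgv i (by omega)
    have e2 : w.getVert (i + 1) = V (((i : ZMod 14) - 1) + 1) := by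
      rw [hgv (i+1) (by omega)]
      congr 1
      push_cast
      ring
    rw [e1, e2, Sym2.eq_iff] at hi
    rcases hi with ⟨h1, h2⟩ | ⟨h1, h2⟩
    · left; rw [← hVinj h1, ← hVinj h2]
    · right; rw [← hVinj h1, ← hVinj h2]
  -- set up the index action of α
  have hVbij : Function.Bijective V := Finite.injective_iff_bijective.mp hVinj
  have hVsurj := hVbij.surjective
  set E : ZMod 14 ≃ ZMod 14 := Equiv.ofBijective V hVbij with hEdef
  set σ : ZMod 14 → ZMod 14 := fun i => E.symm (α (V i)) with hσdef
  have hσ : ∀ i, V (σ i) = α (V i) := fun i => E.apply_symm_apply (α (V i))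
  have hαe : ∀ e ∈ s, Sym2.map ⇑α e ∈ s := fun e he => hfix ▸ Finset.mem_image_of_mem _ he
  have hσinj : Function.Injective σ := by
    intro a b hab
    have : V (σ a) = V (σ b) := by rw [hab]
    rw [hσ, hσ] at this
    exact hVinj (α.toEquiv.injective (by exact this))
  have hstep : ∀ i, σ (i + 1) = σ i + 1 ∨ σ i = σ (i + 1) + 1 := by
    intro i
    have h1 := hαe _ (hmem i)
    rw [Sym2.map_pair_eq, ← hσ, ← hσ] at h1
    exact hchar _ _ h1
  have hcast : ∀ i : ZMod 14, ((i.val : ℕ) : ZMod 14) = i := by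
    intro i; rw [ZMod.natCast_val, ZMod.cast_id]
  -- the sign is constant
  have hsign : ∃ ε : ZMod 14, (ε = 1 ∨ ε = -1) ∧ ∀ i, σ (i + 1) = σ i + ε := by
    have hconst : ∀ i, σ (i + 1) = σ i + 1 → σ (i + 1 + 1) = σ (i + 1) + 1 := by
      intro i hi
      rcases hstep (i + 1) with h | h
      · exact h
      · exfalso
        have : σ (i + 1 + 1) = σ i := by
          have := hi ▸ h
          have h2 : σ (i+1+1) + 1 = σ i + 1 := by rw [← hi, ← h]
          exact add_right_cancel h2
        have := hσinj this
        have : (2 : ZMod 14) = 0 := by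
          have h3 : i + 1 + 1 = i + 2 := by ring
          rw [h3] at this
          have := sub_eq_zero.mpr this
          simpa using this
        exact absurd this (by decide)
    have hconst' : ∀ i, σ i = σ (i + 1) + 1 → σ (i + 1) = σ (i + 1 + 1) + 1 := by
      intro i hi
      rcases hstep (i + 1) with h | h
      · exfalso
        have h2 : σ (i + 1 + 1) = σ i := by rw [h, hi]
        have := hσinj h2
        have : (2 : ZMod 14) = 0 := by
          have h3 : i + 1 + 1 = i + 2 := by ring
          rw [h3] at this
          have := sub_eq_zero.mpr this
          simpa using this
        exact absurd this (by decide)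
      · exact h
    rcases hstep 0 with h0 | h0
    · refine ⟨1, Or.inl rfl, ?_⟩
      have key : ∀ n : ℕ, σ ((n : ZMod 14) + 1) = σ (n : ZMod 14) + 1 := by
        intro n
        induction n with
        | zero => simpa using h0
        | succ k ih =>
          have := hconst _ ih
          convert this using 3 <;> push_cast <;> ring
      intro i
      have := key i.val
      rwa [hcast i] at this
    · refine ⟨-1, Or.inr rfl, ?_⟩
      have key : ∀ n : ℕ, σ (↑n : ZMod 14) = σ ((n : ZMod 14) + 1) + 1 := by
        intro n
        induction n with
        | zero => simpa using h0
        | succ k ih =>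
          have := hconst' _ ih
          convert this using 3 <;> push_cast <;> ring
      intro i
      have := key i.val
      rw [hcast i] at this
      rw [this]; ring
  obtain ⟨ε, hεval, hε⟩ := hsign
  set d : ZMod 14 := σ 0 with hddef
  have hform : ∀ i, σ i = d + ε * i := by
    have key : ∀ n : ℕ, σ (n : ZMod 14) = d + ε * n := by
      intro n
      induction n with
      | zero => simp [hddef]
      | succ k ih =>
        have h1 : ((k+1 : ℕ) : ZMod 14) = (k : ZMod 14) + 1 := by push_cast; ring
        rw [h1, hε, ih]; push_cast; ring
    intro i
    have := key i.val
    rwa [hcast i] at this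
  have hαV : ∀ i, α (V i) = V (d + ε * i) := by
    intro i; rw [← hσ, hform]
  -- helper to conclude order 2
  have finish2 : α ^ 2 = 1 → orderOf α = 2 := by
    intro h2
    have hne : α ≠ 1 := by
      rintro rfl
      rw [orderOf_one] at hα
      exact absurd hα (by decide)
    exact orderOf_eq_prime h2 hne
  rcases hεval with hε1 | hεm1
  · -- rotation case
    subst hε1
    simp only [one_mul] at hαV
    have hpow : ∀ (k : ℕ) (i : ZMod 14), (α ^ k) (V i) = V ((k : ZMod 14) * d + i) := by
      intro k
      induction k with
      | zero => intro i; simp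
      | succ m ih =>
        intro i
        rw [pow_succ, RelIso.mul_apply, hαV, ih]
        congr 1
        push_cast
        ring
    by_cases hd7 : d = 7
    · apply finish2
      apply RelIso.ext
      intro x
      obtain ⟨i, rfl⟩ := hVsurj x
      rw [show ((1 : heawood ≃g heawood) (V i)) = V i from rfl]
      have := hpow 2 i
      rw [hd7, (by decide : ((2:ℕ) : ZMod 14) * 7 = 0)] at this
      simpa using this
    by_cases hdeven : d.val % 2 = 0
    · exfalso
      have h7 : α ^ 7 = 1 := by
        apply RelIso.ext
        intro x
        obtain ⟨i, rfl⟩ := hVsurj x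
        have := hpow 7 i
        rw [(by decide : ∀ d : ZMod 14, d.val % 2 = 0 → ((7:ℕ) : ZMod 14) * d = 0) d hdeven] at this
        rw [show ((1 : heawood ≃g heawood) (V i)) = V i from rfl]
        simpa using this
      have hdvd : orderOf α ∣ 7 := orderOf_dvd_of_pow_eq_one h7
      rcases (Nat.Prime.eq_one_or_self_of_dvd (by norm_num) _ hdvd) with h1 | h1 <;>
        rw [h1] at hα <;> exact absurd hα (by decide)
    · -- odd rotation: contradiction via chords
      exfalso
      have hdodd : d.val % 2 = 1 := Nat.mod_two_eq_zero_or_one _ |>.resolve_left hdeven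
      have hdeg := heawood_deg
      have hne2 : ∀ i : ZMod 14, i + 1 ≠ i - 1 := by decide
      have hex : ∀ i : ZMod 14, ∃ u, heawood.Adj (V i) u ∧ u ≠ V (i + 1) ∧ u ≠ V (i - 1) := by
        intro i
        have hn1 : V (i + 1) ∈ heawood.neighborFinset (V i) := by
          rw [SimpleGraph.mem_neighborFinset]; exact hadj i
        have hn2 : V (i - 1) ∈ heawood.neighborFinset (V i) := by
          rw [SimpleGraph.mem_neighborFinset]
          have := hadj (i - 1)
          rw [sub_add_cancel] at this
          exact this.symm
        have hsub : ({V (i + 1), V (i - 1)} : Finset (ZMod 14)) ⊆ heawood.neighborFinset (V i) := by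
          intro x hx
          rcases Finset.mem_insert.mp hx with rfl | hx
          · exact hn1
          · rw [Finset.mem_singleton.mp hx]; exact hn2
        have hd1 : V (i + 1) ≠ V (i - 1) := fun hh => hne2 i (hVinj hh)
        have hcard2 : ({V (i + 1), V (i - 1)} : Finset (ZMod 14)).card = 2 := by
          rw [Finset.card_insert_of_notMem (by simpa using hd1), Finset.card_singleton]
        have hpos : 0 < ((heawood.neighborFinset (V i)) \ {V (i + 1), V (i - 1)}).card := by
          rw [Finset.card_sdiff_of_subset hsub, hcard2, show (heawood.neighborFinset (V i)).card = 3 from hdeg (V i)]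
          norm_num
        obtain ⟨u, hu⟩ := Finset.card_pos.mp hpos
        rw [Finset.mem_sdiff, SimpleGraph.mem_neighborFinset] at hu
        refine ⟨u, hu.1, ?_, ?_⟩
        · intro hh; exact hu.2 (by simp [hh])
        · intro hh; exact hu.2 (by simp [hh])
      have huniq : ∀ i u', heawood.Adj (V i) u' → u' ≠ V (i + 1) → u' ≠ V (i - 1) →
          ∀ u2, heawood.Adj (V i) u2 → u2 ≠ V (i + 1) → u2 ≠ V (i - 1) → u2 = u' := by
        intro i u' ha1 hb1 hc1 u2 ha2 hb2 hc2
        have hd1 : V (i + 1) ≠ V (i - 1) := fun hh => hne2 i (hVinj hh)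
        have hcard3 : ({V (i + 1), V (i - 1), u'} : Finset (ZMod 14)).card = 3 := by
          rw [Finset.card_insert_of_notMem (by simp [hd1, Ne.symm hb1]),
            Finset.card_insert_of_notMem (by simp [Ne.symm hc1]), Finset.card_singleton]
        have hsub : ({V (i + 1), V (i - 1), u'} : Finset (ZMod 14)) ⊆ heawood.neighborFinset (V i) := by
          intro x hx
          simp only [Finset.mem_insert, Finset.mem_singleton] at hx
          rw [SimpleGraph.mem_neighborFinset]
          rcases hx with rfl | rfl | rfl
          · exact hadj i
          · have := hadj (i - 1); rw [sub_add_cancel] at this; exact this.symm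
          · exact ha1
        have heq : heawood.neighborFinset (V i) = {V (i + 1), V (i - 1), u'} :=
          (Finset.eq_of_subset_of_card_le hsub (by rw [hcard3]; exact le_of_eq (hdeg (V i)))).symm
        have hmem2 : u2 ∈ heawood.neighborFinset (V i) := by
          rw [SimpleGraph.mem_neighborFinset]; exact ha2
        rw [heq] at hmem2
        simp only [Finset.mem_insert, Finset.mem_singleton] at hmem2
        rcases hmem2 with rfl | rfl | rfl
        · exact absurd rfl hb2
        · exact absurd rfl hc2
        · rfl
      choose c hc1 hc2 hc3 using hex
      set γ : ZMod 14 → ZMod 14 := fun i => E.symm (c i) with hγdef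
      have hγc : ∀ i, V (γ i) = c i := fun i => E.apply_symm_apply (c i)
      have hγadj : ∀ i, heawood.Adj (V i) (V (γ i)) := by
        intro i; rw [hγc]; exact hc1 i
      have hγne1 : ∀ i, γ i ≠ i + 1 := fun i hh => hc2 i (by rw [← hγc, hh])
      have hγne2 : ∀ i, γ i ≠ i - 1 := fun i hh => hc3 i (by rw [← hγc, hh])
      have hγne0 : ∀ i, γ i ≠ i := fun i hh => (heawood.ne_of_adj (hγadj i)) (by rw [hh])
      have hγequiv : ∀ i, γ (i + d) = γ i + d := by
        intro i
        have hadj' : heawood.Adj (V (i + d)) (V (γ i + d)) := by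
          have h0 := α.map_adj_iff.mpr (hγadj i)
          rwa [hαV, hαV, add_comm d i, add_comm d (γ i)] at h0
        have hb : V (γ i + d) ≠ V ((i + d) + 1) := by
          intro hh
          apply hγne1 i
          have h2 := hVinj hh
          have h3 : γ i + d = (i + 1) + d := by rw [h2]; ring
          exact add_right_cancel h3
        have hcne : V (γ i + d) ≠ V ((i + d) - 1) := by
          intro hh
          apply hγne2 i
          have h2 := hVinj hh
          have h3 : γ i + d = (i - 1) + d := by rw [h2]; ring
          exact add_right_cancel h3
        have h4 := huniq (i + d) (c (i + d)) (hc1 (i + d)) (hc2 (i + d)) (hc3 (i + d))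
          (V (γ i + d)) hadj' hb hcne
        have h5 := h4.trans (hγc (i + d)).symm
        exact (hVinj h5).symm
      have hγsym : ∀ i, γ (γ i) = i := by
        intro i
        have ha : heawood.Adj (V (γ i)) (V i) := (hγadj i).symm
        have hb : V i ≠ V (γ i + 1) := by
          intro hh
          have h2 := hVinj hh
          exact hγne2 i (eq_sub_iff_add_eq.mpr h2.symm)
        have hcx : V i ≠ V (γ i - 1) := by
          intro hh
          have h2 := hVinj hh
          exact hγne1 i (sub_eq_iff_eq_add.mp h2.symm)
        have h4 := huniq (γ i) (c (γ i)) (hc1 (γ i)) (hc2 (γ i)) (hc3 (γ i)) (V i) ha hb hcx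
        have h5 := h4.trans (hγc (γ i)).symm
        exact (hVinj h5).symm
      obtain ⟨d', hd'⟩ := (by decide :
        ∀ x : ZMod 14, x.val % 2 = 1 → x ≠ 7 → ∃ y, x * y = 1) d hdodd hd7
      have hkey : ∀ n : ℕ, γ ((n : ZMod 14) * d) - (n : ZMod 14) * d = γ 0 := by
        intro n
        induction n with
        | zero => simp
        | succ k ih =>
          have h1 : ((k + 1 : ℕ) : ZMod 14) * d = ((k : ℕ) : ZMod 14) * d + d := by
            push_cast; ring
          rw [h1, hγequiv]
          have h2 : γ ((k : ℕ) * d) + d - ((k : ℕ) * d + d) = γ ((k : ℕ) * d) - (k : ℕ) * d := by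
            ring
          rw [h2]
          exact ih
      have hγall : ∀ j, γ j = j + γ 0 := by
        intro j
        have h1 : (((j * d').val : ℕ) : ZMod 14) * d = j := by
          rw [hcast (j * d')]
          calc j * d' * d = j * (d * d') := by ring
          _ = j := by rw [hd']; ring
        have h6 := hkey ((j * d').val)
        rw [h1] at h6
        rw [sub_eq_iff_eq_add.mp h6]; ring
      have h2cc : γ 0 + γ 0 = 0 := by
        have h7 := hγsym 0
        rwa [hγall (γ 0)] at h7
      have hcc7 : γ 0 = 7 :=
        (by decide : ∀ x : ZMod 14, x + x = 0 → x ≠ 0 → x = 7) _ h2cc (hγne0 0)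
      have A1 : heawood.Adj (V 0) (V 1) := by have := hadj 0; rwa [zero_add] at this
      have A2 : heawood.Adj (V 1) (V 8) := by
        have := hγadj 1
        rwa [hγall 1, hcc7, (by decide : (1 : ZMod 14) + 7 = 8)] at this
      have A3 : heawood.Adj (V 8) (V 7) := by
        have := hadj 7
        rw [(by decide : (7 : ZMod 14) + 1 = 8)] at this
        exact this.symm
      have A4 : heawood.Adj (V 7) (V 0) := by
        have := hγadj 7
        rwa [hγall 7, hcc7, (by decide : (7 : ZMod 14) + 7 = 0)] at this
      rcases heawood_no4 _ _ _ _ A1 A2 A3 A4 with hh | hh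
      · exact absurd (hVinj hh) (by decide)
      · exact absurd (hVinj hh) (by decide)
  · -- reflection case
    subst hεm1
    apply finish2
    apply RelIso.ext
    intro x
    obtain ⟨i, rfl⟩ := hVsurj x
    rw [pow_two, RelIso.mul_apply, hαV, hαV,
      show ((1 : heawood ≃g heawood) (V i)) = V i from rfl]
    congr 1
    ring
end
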